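/- Let n ≥ 1. Then B = Σ·J_{n+1}^{−1}·Σᵀ, and B is a symmetric positive definite matrix. -/

import Mathlib

open Matrix Polynomial

noncomputable section

/-- The `n × n` tridiagonal matrix `B` of the Marx generator. -/
def marxB (n : ℕ) : Matrix (Fin n) (Fin n) ℝ :=
  Matrix.of fun i j =>
    if i = j then (if (i : ℕ) = n - 1 then ((n : ℝ) + 1) / n else 2)
    else if (i : ℕ) + 1 = (j : ℕ) ∨ (j : ℕ) + 1 = (i : ℕ) then -1 else 0

/-- The `n × (n+1)` difference matrix `Σ`. -/
def marxSigma (n : ℕ) : Matrix (Fin n) (Fin (n + 1)) ℝ :=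
  Matrix.of fun i j =>
    if (j : ℕ) = (i : ℕ) then 1 else if (j : ℕ) = (i : ℕ) + 1 then -1 else 0

/-- `J_{n+1} = diag(1, …, 1, n)`. -/
def marxJ (n : ℕ) : Matrix (Fin (n + 1)) (Fin (n + 1)) ℝ :=
  Matrix.diagonal fun j => if (j : ℕ) = n then (n : ℝ) else 1

/-- The inverse of `marxJ`. -/
def marxD (n : ℕ) : Matrix (Fin (n + 1)) (Fin (n + 1)) ℝ :=
  Matrix.diagonal fun j => if (j : ℕ) = n then (n : ℝ)⁻¹ else 1

lemma sigma_eq (n : ℕ) (i : Fin n) (j : Fin (n + 1)) :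
    marxSigma n i j
      = (if j = Fin.castSucc i then 1 else 0) + (if j = Fin.succ i then -1 else 0) := by
  simp only [marxSigma, Matrix.of_apply, Fin.ext_iff, Fin.coe_castSucc, Fin.val_succ]
  split_ifs <;> simp_all

lemma sigma_sum (n : ℕ) (i : Fin n) (f : Fin (n + 1) → ℝ) :
    ∑ j, marxSigma n i j * f j = f (Fin.castSucc i) - f (Fin.succ i) := by
  simp [sigma_eq, add_mul, Finset.sum_add_distrib, ite_mul, sub_eq_add_neg,
    Finset.sum_ite_eq']

lemma marxJ_inv (n : ℕ) (hn : 1 ≤ n) : (marxJ n)⁻¹ = marxD n := by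
  have hn' : (n : ℝ) ≠ 0 := Nat.cast_ne_zero.mpr (by omega)
  apply Matrix.inv_eq_right_inv
  rw [marxJ, marxD, Matrix.diagonal_mul_diagonal]
  rw [show (fun i : Fin (n + 1) =>
        (if (i : ℕ) = n then (n : ℝ) else 1) * (if (i : ℕ) = n then (n : ℝ)⁻¹ else 1))
      = fun _ => (1 : ℝ) from funext fun i => by
        by_cases h : (i : ℕ) = n <;> simp [h, mul_inv_cancel₀ hn'],
    Matrix.diagonal_one]

lemma marx_part1 (n : ℕ) (hn : 1 ≤ n) :
    marxB n = marxSigma n * (marxJ n)⁻¹ * (marxSigma n)ᵀ := by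
  rw [marxJ_inv n hn, Matrix.mul_assoc]
  ext i k
  rw [Matrix.mul_apply]
  have h1 : ∀ j, marxSigma n i j * (marxD n * (marxSigma n)ᵀ) j k
      = marxSigma n i j * ((if (j : ℕ) = n then (n : ℝ)⁻¹ else 1) * marxSigma n k j) := by
    intro j
    rw [marxD, Matrix.diagonal_mul, Matrix.transpose_apply]
  simp only [h1]
  rw [sigma_sum]
  rw [sigma_eq n k, sigma_eq n k]
  have hi := i.isLt
  have hk := k.isLt
  have hn' : (n : ℝ) ≠ 0 := Nat.cast_ne_zero.mpr (by omega)
  simp only [Fin.ext_iff, Fin.coe_castSucc, Fin.val_succ, marxB, Matrix.of_apply]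
  split_ifs <;> first
    | (exfalso; omega)
    | (field_simp; try ring)
    | ring

/-- A right inverse `T` of `Σ`. -/
def marxT (n : ℕ) : Matrix (Fin (n + 1)) (Fin n) ℝ :=
  Matrix.of fun j i => if (j : ℕ) ≤ (i : ℕ) then 1 else 0

lemma sigma_mul_T (n : ℕ) : marxSigma n * marxT n = 1 := by
  ext i k
  rw [Matrix.mul_apply, sigma_sum]
  simp only [marxT, Matrix.of_apply, Fin.coe_castSucc, Fin.val_succ, Matrix.one_apply,
    Fin.ext_iff]
  split_ifs <;> first | (exfalso; omega) | ring1

lemma sigmaT_mulVec_inj (n : ℕ) (x : Fin n → ℝ) (h : (marxSigma n)ᵀ *ᵥ x = 0) : x = 0 := by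
  have hTx : (marxT n)ᵀ *ᵥ ((marxSigma n)ᵀ *ᵥ x) = x := by
    rw [Matrix.mulVec_mulVec, ← Matrix.transpose_mul, sigma_mul_T, Matrix.transpose_one,
      Matrix.one_mulVec]
  rw [h, Matrix.mulVec_zero] at hTx
  exact hTx.symm

lemma marxB_isSymm (n : ℕ) : (marxB n).IsSymm := by
  ext i j
  simp only [marxB, Matrix.transpose_apply, Matrix.of_apply]
  split_ifs <;> simp_all <;> omega

/-- `B = Σ·J_{n+1}⁻¹·Σᵀ`, and `B` is symmetric positive definite. -/
theorem statement8 (n : ℕ) (hn : 1 ≤ n) :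
    marxB n = marxSigma n * (marxJ n)⁻¹ * (marxSigma n)ᵀ ∧
    (marxB n).IsSymm ∧ (marxB n).PosDef := by
  have hfac := marx_part1 n hn
  have hsymm := marxB_isSymm n
  refine ⟨hfac, hsymm, Matrix.PosDef.of_dotProduct_mulVec_pos ?_ ?_⟩
  · -- IsHermitian
    rw [Matrix.IsHermitian, Matrix.conjTranspose_eq_transpose_of_trivial]
    exact hsymm
  · -- positivity of the quadratic form
    intro x hx
    have hn' : (0 : ℝ) < (n : ℝ) := by exact_mod_cast Nat.pos_of_ne_zero (by omega)
    set y : Fin (n + 1) → ℝ := (marxSigma n)ᵀ *ᵥ x with hy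
    have hyne : y ≠ 0 := fun h0 => hx (sigmaT_mulVec_inj n x h0)
    have hd : ∀ j : Fin (n + 1), 0 < (if (j : ℕ) = n then (n : ℝ)⁻¹ else 1) := by
      intro j
      split_ifs
      · exact inv_pos.mpr hn'
      · norm_num
    have hquad : star x ⬝ᵥ (marxB n *ᵥ x)
        = ∑ j, y j * ((if (j : ℕ) = n then (n : ℝ)⁻¹ else 1) * y j) := by
      rw [hfac, marxJ_inv n hn, show star x = x from rfl]
      rw [← Matrix.mulVec_mulVec, ← Matrix.mulVec_mulVec, Matrix.dotProduct_mulVec,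
        ← Matrix.mulVec_transpose, ← hy]
      simp only [dotProduct, marxD, Matrix.mulVec_diagonal]
    rw [hquad]
    obtain ⟨j0, hj0⟩ := Function.ne_iff.mp hyne
    apply Finset.sum_pos'
    · intro j _
      have := hd j
      have hsq : 0 ≤ y j * y j := mul_self_nonneg _
      nlinarith [hd j, mul_self_nonneg (y j)]
    · refine ⟨j0, Finset.mem_univ _, ?_⟩
      have h0 : (0 : ℝ) < y j0 * y j0 := mul_self_pos.mpr (by simpa using hj0)
      nlinarith [hd j0]

end
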